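/- Let ℓ ≥ 2 and let τ : ℝ/ℤ → ℝ be a non-constant Lipschitz function with ∫τ = 0. Suppose for every n ≥ 1 there exist λₙ ∈ (0, λ₀] with λ₀ < 1 and Lipschitz functions μₙ with ∫μₙ = 0, μ₀ = τ, and μₙ(ℓθ) - λₙμₙ(θ) = μ_{n-1}(θ) for all θ and n. Then for every k ∈ ℤ with ℓ ∤ k and every j ≥ 0, the Fourier coefficient τ̂(ℓʲk) = 0; hence τ is constant, a contradiction. In particular no such infinite sequence exists. -/

import Mathlib

open MeasureTheory AddCircle

private lemma haar_eq_vol' : (haarAddCircle : Measure UnitAddCircle) = volume := by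
  rw [volume_eq_smul_haarAddCircle]; simp

private lemma integrable_of_continuousC' (g : UnitAddCircle → ℂ) (hcont : Continuous g) :
    Integrable g haarAddCircle := by
  have hcs : HasCompactSupport g :=
    IsCompact.of_isClosed_subset isCompact_univ (isClosed_tsupport g) (Set.subset_univ _)
  exact hcont.integrable_of_hasCompactSupport hcs

private lemma norm_fourier_pt' (n : ℤ) (t : UnitAddCircle) : ‖fourier n t‖ = 1 := by
  rw [fourier_apply]
  exact Circle.norm_coe _

private lemma norm_fourierCoeff_le' (f : UnitAddCircle → ℂ) (M : ℝ) (hM : ∀ t, ‖f t‖ ≤ M)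
    (q : ℤ) : ‖fourierCoeff f q‖ ≤ M := by
  have h := norm_integral_le_of_norm_le_const (μ := haarAddCircle)
    (f := fun t : UnitAddCircle => fourier (-q) t • f t) (C := M) ?_
  · calc ‖fourierCoeff f q‖ = ‖∫ t : UnitAddCircle, fourier (-q) t • f t ∂haarAddCircle‖ := rfl
      _ ≤ M * (haarAddCircle Set.univ).toReal := h
      _ = M := by simp
  · refine Filter.Eventually.of_forall fun t => ?_
    rw [norm_smul, norm_fourier_pt', one_mul]
    exact hM t

private lemma fourier_comp_smul' (m q : ℤ) (t : UnitAddCircle) :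
    fourier (-q) (m • t) = fourier (-(m * q)) t := by
  rw [fourier_apply, fourier_apply, smul_smul]
  ring_nf

private lemma integral_comp_zsmul' (g : UnitAddCircle → ℂ) (hg : Continuous g) (m : ℤ)
    (hm : m ≠ 0) :
    ∫ t : UnitAddCircle, g (m • t) ∂haarAddCircle = ∫ t : UnitAddCircle, g t ∂haarAddCircle := by
  have hmp : MeasurePreserving (fun θ : UnitAddCircle => m • θ) haarAddCircle haarAddCircle :=
    Measure.measurePreserving_zsmul haarAddCircle hm
  calc ∫ t : UnitAddCircle, g (m • t) ∂haarAddCircle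
      = ∫ u, g u ∂(Measure.map (fun θ : UnitAddCircle => m • θ) haarAddCircle) := by
        rw [integral_map hmp.measurable.aemeasurable]
        rw [hmp.map_eq]; exact hg.aestronglyMeasurable
    _ = ∫ t : UnitAddCircle, g t ∂haarAddCircle := by rw [hmp.map_eq]

private lemma fourierCoeff_comp_smul' (f : UnitAddCircle → ℂ) (hf : Continuous f) (m : ℤ)
    (hm : m ≠ 0) (q : ℤ) :
    fourierCoeff (fun θ : UnitAddCircle => f (m • θ)) (m * q) = fourierCoeff f q := by
  unfold fourierCoeff
  have h1 : ∫ t : UnitAddCircle, fourier (-(m * q)) t • f (m • t) ∂haarAddCircle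
      = ∫ t : UnitAddCircle, (fun u => fourier (-q) u • f u) (m • t) ∂haarAddCircle := by
    refine integral_congr_ae (Filter.Eventually.of_forall fun t => ?_)
    simp [fourier_comp_smul' m q t]
  rw [h1, integral_comp_zsmul' (fun u => fourier (-q) u • f u) ((map_continuous (fourier (-q))).smul hf) m hm]

private lemma fourier_add_x' {n : ℤ} {x y : UnitAddCircle} :
    fourier n (x + y) = fourier n x * fourier n y := by
  rw [fourier_apply, fourier_apply, fourier_apply, zsmul_add, toCircle_add, Circle.coe_mul]

private lemma fourier_ne_one' (ℓ : ℕ) (hℓ : 2 ≤ ℓ) (q : ℤ) (h : ¬ ((ℓ:ℤ) ∣ q)) :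
    fourier (-q) (((ℓ:ℝ)⁻¹ : ℝ) : UnitAddCircle) ≠ 1 := by
  have hl0 : (ℓ:ℂ) ≠ 0 := Nat.cast_ne_zero.mpr (by omega)
  rw [fourier_coe_apply]
  intro hc
  rw [Complex.exp_eq_one_iff] at hc
  obtain ⟨k, hk⟩ := hc
  have h2 : (2 * (Real.pi:ℂ) * Complex.I : ℂ) ≠ 0 := by
    simp [Real.pi_ne_zero, Complex.I_ne_zero]
  have hk' : (2 * (Real.pi:ℂ) * Complex.I) * ((-q) * ((ℓ:ℂ))⁻¹)
      = (2 * (Real.pi:ℂ) * Complex.I) * k := by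
    push_cast at hk ⊢
    linear_combination hk
  have h3 : ((-q:ℂ)) * ((ℓ:ℂ))⁻¹ = k := mul_left_cancel₀ h2 hk'
  have h4 : ((-q:ℂ)) = k * ℓ := by
    field_simp at h3
    linear_combination h3
  have h5 : (-q : ℤ) = k * ℓ := by exact_mod_cast h4
  exact h ⟨-k, by linear_combination -h5⟩

private lemma zsmul_inv_eq_zero' (ℓ : ℕ) (hℓ : 2 ≤ ℓ) :
    (ℓ:ℤ) • (((ℓ:ℝ)⁻¹ : ℝ) : UnitAddCircle) = 0 := by
  have hl0 : (ℓ:ℝ) ≠ 0 := by positivity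
  rw [← AddCircle.coe_zsmul]
  have : ((ℓ:ℤ) • ((ℓ:ℝ)⁻¹) : ℝ) = 1 := by
    rw [zsmul_eq_mul]; push_cast; field_simp
  rw [this]
  exact AddCircle.coe_period 1

private lemma fourierCoeff_comp_smul_nondvd' (f : UnitAddCircle → ℂ) (ℓ : ℕ)
    (hℓ : 2 ≤ ℓ) (q : ℤ) (h : ¬ ((ℓ:ℤ) ∣ q)) :
    fourierCoeff (fun θ : UnitAddCircle => f ((ℓ:ℤ) • θ)) q = 0 := by
  set c : UnitAddCircle := (((ℓ:ℝ)⁻¹ : ℝ) : UnitAddCircle) with hc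
  have key : fourierCoeff (fun θ : UnitAddCircle => f ((ℓ:ℤ) • θ)) q
      = fourier (-q) c * fourierCoeff (fun θ : UnitAddCircle => f ((ℓ:ℤ) • θ)) q := by
    calc fourierCoeff (fun θ : UnitAddCircle => f ((ℓ:ℤ) • θ)) q
        = ∫ t : UnitAddCircle, fourier (-q) t • f ((ℓ:ℤ) • t) ∂haarAddCircle := rfl
      _ = ∫ t : UnitAddCircle, fourier (-q) (t + c) • f ((ℓ:ℤ) • (t + c)) ∂haarAddCircle := by
          rw [integral_add_right_eq_self (μ := haarAddCircle)
            (fun t : UnitAddCircle => fourier (-q) t • f ((ℓ:ℤ) • t)) c]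
      _ = ∫ t : UnitAddCircle, fourier (-q) c * (fourier (-q) t • f ((ℓ:ℤ) • t)) ∂haarAddCircle := by
          refine integral_congr_ae (Filter.Eventually.of_forall fun t => ?_)
          show fourier (-q) (t + c) • f ((ℓ:ℤ) • (t + c))
            = fourier (-q) c * (fourier (-q) t • f ((ℓ:ℤ) • t))
          rw [zsmul_add, zsmul_inv_eq_zero' ℓ hℓ, add_zero, fourier_add_x']
          simp [smul_eq_mul]; ring
      _ = fourier (-q) c * ∫ t : UnitAddCircle, fourier (-q) t • f ((ℓ:ℤ) • t) ∂haarAddCircle :=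
          integral_const_mul _ _
      _ = fourier (-q) c * fourierCoeff (fun θ : UnitAddCircle => f ((ℓ:ℤ) • θ)) q := rfl
  have hne := fourier_ne_one' ℓ hℓ q h
  have h0 : (1 - (fourier (-q) c : ℂ)) * fourierCoeff (fun θ : UnitAddCircle => f ((ℓ:ℤ) • θ)) q
      = 0 := by
    rw [sub_mul, one_mul]
    nth_rewrite 1 [key]
    ring
  rcases mul_eq_zero.mp h0 with h1 | h2
  · exact absurd (by linear_combination -h1 : (fourier (-q) c : ℂ) = 1) hne
  · exact h2

private lemma coe_int_eq_zero' (k : ℤ) : ((k : ℝ) : UnitAddCircle) = 0 := by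
  have : ((k:ℝ) : UnitAddCircle) = ((k • (1:ℝ) : ℝ) : UnitAddCircle) := by norm_num
  rw [this, AddCircle.coe_zsmul, AddCircle.coe_period, smul_zero]

private lemma exists_lift' (ℓ : ℕ) (hℓ : 2 ≤ ℓ) (u v : UnitAddCircle) :
    ∃ x y : UnitAddCircle, (ℓ:ℤ) • x = u ∧ (ℓ:ℤ) • y = v ∧ dist x y ≤ dist u v / ℓ := by
  have hl0 : (0:ℝ) < ℓ := by positivity
  obtain ⟨a, rfl⟩ := QuotientAddGroup.mk_surjective u
  obtain ⟨b, rfl⟩ := QuotientAddGroup.mk_surjective v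
  set k : ℤ := round (a - b) with hk
  set a' : ℝ := a - k with ha'
  have hau : ((a' : ℝ) : UnitAddCircle) = (a : UnitAddCircle) := by
    rw [ha', AddCircle.coe_sub, coe_int_eq_zero', sub_zero]
  have hdist : dist ((a:UnitAddCircle)) ((b:UnitAddCircle)) = |a' - b| := by
    rw [dist_eq_norm, ← AddCircle.coe_sub, UnitAddCircle.norm_eq, ha']
    ring_nf
    rfl
  refine ⟨((a' / ℓ : ℝ) : UnitAddCircle), ((b / ℓ : ℝ) : UnitAddCircle), ?_, ?_, ?_⟩
  · rw [← AddCircle.coe_zsmul, zsmul_eq_mul, ← hau]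
    congr 1
    push_cast
    field_simp
  · rw [← AddCircle.coe_zsmul, zsmul_eq_mul]
    congr 1
    push_cast
    field_simp
  · rw [dist_eq_norm, ← AddCircle.coe_sub, hdist]
    refine (QuotientAddGroup.norm_mk_le_norm).trans ?_
    rw [Real.norm_eq_abs, ← sub_div, abs_div, abs_of_pos hl0]

private lemma lip_step' (ℓ : ℕ) (hℓ : 2 ≤ ℓ) (Λ : ℝ) (hΛ0 : 0 < Λ) (hΛ : Λ < 1)
    (lm : ℝ) (hlm : lm ∈ Set.Ioc (0:ℝ) Λ)
    (g h : UnitAddCircle → ℝ) (L₀ K : ℝ) (hL₀ : 0 ≤ L₀) (hK0 : 0 ≤ K)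
    (hg : ∀ x y, |g x - g y| ≤ L₀ * dist x y)
    (hK : ∀ x y, |h x - h y| ≤ K * dist x y)
    (hrec : ∀ θ : UnitAddCircle, h ((ℓ:ℤ) • θ) - lm * h θ = g θ) :
    ∀ x y, |h x - h y| ≤ L₀ * dist x y := by
  have hl1 : (1:ℝ) ≤ ℓ := by exact_mod_cast le_trans (by norm_num) hℓ
  have hl2 : (2:ℝ) ≤ ℓ := by exact_mod_cast hℓ
  have hl0 : (0:ℝ) < ℓ := by linarith
  have main : ∀ m : ℕ, ∀ x y, |h x - h y| ≤ (L₀ + (Λ/ℓ)^m * K) * dist x y := by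
    intro m
    induction m with
    | zero =>
      intro x y
      refine (hK x y).trans ?_
      have := dist_nonneg (x := x) (y := y)
      nlinarith
    | succ m ih =>
      intro u v
      obtain ⟨x, y, hx, hy, hd⟩ := exists_lift' ℓ hℓ u v
      have hu : h u = g x + lm * h x := by rw [← hx, ← hrec x]; ring
      have hv : h v = g y + lm * h y := by rw [← hy, ← hrec y]; ring
      have habs : |h u - h v| ≤ |g x - g y| + lm * |h x - h y| := by
        rw [hu, hv]
        calc |g x + lm * h x - (g y + lm * h y)| = |(g x - g y) + lm * (h x - h y)| := by ring_nf
          _ ≤ |g x - g y| + |lm * (h x - h y)| := abs_add_le _ _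
          _ = |g x - g y| + lm * |h x - h y| := by
              rw [abs_mul, abs_of_pos hlm.1]
      have hdxy : (0:ℝ) ≤ dist x y := dist_nonneg
      have hduv : (0:ℝ) ≤ dist u v := dist_nonneg
      have hB : (0:ℝ) ≤ L₀ + (Λ/ℓ)^m * K := by positivity
      have step : |h u - h v| ≤ (L₀ + lm * (L₀ + (Λ/ℓ)^m * K)) * dist x y := by
        have h1 := hg x y
        have h2 := ih x y
        have h3 : lm * |h x - h y| ≤ lm * ((L₀ + (Λ/ℓ)^m * K) * dist x y) :=
          mul_le_mul_of_nonneg_left h2 hlm.1.le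
        calc |h u - h v| ≤ |g x - g y| + lm * |h x - h y| := habs
          _ ≤ L₀ * dist x y + lm * ((L₀ + (Λ/ℓ)^m * K) * dist x y) := by linarith
          _ = (L₀ + lm * (L₀ + (Λ/ℓ)^m * K)) * dist x y := by ring
      have hcoef : (0:ℝ) ≤ L₀ + lm * (L₀ + (Λ/ℓ)^m * K) := by
        have := hlm.1.le; positivity
      have step2 : |h u - h v| ≤ (L₀ + lm * (L₀ + (Λ/ℓ)^m * K)) * (dist u v / ℓ) :=
        step.trans (mul_le_mul_of_nonneg_left hd hcoef)
      have hcineq : (L₀ + lm * (L₀ + (Λ/ℓ)^m * K)) / ℓ ≤ L₀ + (Λ/ℓ)^(m+1) * K := by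
        rw [div_le_iff₀ hl0]
        have hlmΛ : lm ≤ Λ := hlm.2
        have hpow : (0:ℝ) ≤ (Λ/ℓ)^m := by positivity
        have e1 : lm * (L₀ + (Λ/ℓ)^m * K) ≤ Λ * (L₀ + (Λ/ℓ)^m * K) :=
          mul_le_mul_of_nonneg_right hlmΛ hB
        have e2 : (Λ/ℓ)^(m+1) * K * ℓ = Λ * ((Λ/ℓ)^m * K) := by
          have hd : Λ / ℓ * ℓ = Λ := div_mul_cancel₀ Λ hl0.ne'
          rw [pow_succ]
          linear_combination ((Λ/ℓ)^m * K) * hd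
        nlinarith
      calc |h u - h v| ≤ (L₀ + lm * (L₀ + (Λ/ℓ)^m * K)) * (dist u v / ℓ) := step2
        _ = ((L₀ + lm * (L₀ + (Λ/ℓ)^m * K)) / ℓ) * dist u v := by ring
        _ ≤ (L₀ + (Λ/ℓ)^(m+1) * K) * dist u v := mul_le_mul_of_nonneg_right hcineq hduv
  intro x y
  have hlim : Filter.Tendsto (fun m : ℕ => (L₀ + (Λ/ℓ)^m * K) * dist x y)
      Filter.atTop (nhds (L₀ * dist x y)) := by
    have h1 : Filter.Tendsto (fun m : ℕ => (Λ/ℓ)^m) Filter.atTop (nhds 0) := by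
      apply tendsto_pow_atTop_nhds_zero_of_lt_one (by positivity)
      rw [div_lt_one hl0]; linarith
    have := ((h1.mul_const K).const_add L₀).mul_const (dist x y)
    simpa using this
  exact ge_of_tendsto' hlim (fun m => main m x y)

private lemma vol_univ' : (volume : Measure UnitAddCircle) Set.univ = 1 := by
  rw [AddCircle.measure_univ]; norm_num

private lemma integrable_of_continuous' (g : UnitAddCircle → ℝ) (hcont : Continuous g) :
    Integrable g volume := by
  have hcs : HasCompactSupport g :=
    IsCompact.of_isClosed_subset isCompact_univ (isClosed_tsupport g) (Set.subset_univ _)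
  exact hcont.integrable_of_hasCompactSupport hcs

private lemma sup_bound' (g : UnitAddCircle → ℝ) (hcont : Continuous g) (L₀ : ℝ) (hL₀ : 0 ≤ L₀)
    (hLip : ∀ x y, |g x - g y| ≤ L₀ * dist x y)
    (hint : ∫ θ : UnitAddCircle, g θ = 0) : ∀ θ, |g θ| ≤ L₀ := by
  have hInt : Integrable g volume := integrable_of_continuous' g hcont
  have hdist : ∀ x y : UnitAddCircle, dist x y ≤ 1 := by
    intro x y
    rw [dist_eq_norm]
    have := AddCircle.norm_le_half_period (p := (1:ℝ)) (x := x - y) one_ne_zero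
    simpa using this.trans (by norm_num)
  obtain ⟨θm, _, hmin'⟩ := isCompact_univ.exists_isMinOn (Set.univ_nonempty)
    hcont.continuousOn
  obtain ⟨θM, _, hmax'⟩ := isCompact_univ.exists_isMaxOn (Set.univ_nonempty)
    hcont.continuousOn
  have hmin : ∀ θ : UnitAddCircle, g θm ≤ g θ := fun θ => hmin' (Set.mem_univ θ)
  have hmax : ∀ θ : UnitAddCircle, g θ ≤ g θM := fun θ => hmax' (Set.mem_univ θ)
  have hm : g θm ≤ 0 := by
    by_contra hpos
    push_neg at hpos
    have h1 : ∫ θ : UnitAddCircle, (g θm : ℝ) ≤ ∫ θ : UnitAddCircle, g θ :=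
      integral_mono (integrable_const _) hInt (fun θ => hmin θ)
    rw [integral_const, measureReal_def, vol_univ'] at h1
    simp at h1
    rw [hint] at h1
    linarith
  have hM : 0 ≤ g θM := by
    by_contra hneg
    push_neg at hneg
    have h1 : ∫ θ : UnitAddCircle, g θ ≤ ∫ θ : UnitAddCircle, (g θM : ℝ) :=
      integral_mono hInt (integrable_const _) (fun θ => hmax θ)
    rw [integral_const, measureReal_def, vol_univ'] at h1
    simp at h1
    rw [hint] at h1
    linarith
  intro θ
  rw [abs_le]
  constructor
  · have h1 := hLip θ θM
    have h2 := hdist θ θM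
    have := abs_le.mp h1
    nlinarith
  · have h1 := hLip θ θm
    have h2 := hdist θ θm
    have := abs_le.mp h1
    nlinarith

private lemma zero_of_fourierCoeff' (f : UnitAddCircle → ℝ) (hcont : Continuous f)
    (hzero : ∀ q : ℤ, fourierCoeff (fun t : UnitAddCircle => (f t : ℂ)) q = 0) :
    ∀ t, f t = 0 := by
  set g : UnitAddCircle → ℂ := fun t => (f t : ℂ) with hg
  have hgc : Continuous g := Complex.continuous_ofReal.comp hcont
  set G : C(UnitAddCircle, ℂ) := ⟨g, hgc⟩ with hG
  set F : Lp ℂ 2 (haarAddCircle (T := 1)) := ContinuousMap.toLp 2 haarAddCircle ℂ G with hF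
  have hae : (F : UnitAddCircle → ℂ) =ᵐ[haarAddCircle] g := ContinuousMap.coeFn_toLp _ _
  have hcoeff : ∀ q : ℤ, fourierCoeff (F : UnitAddCircle → ℂ) q = 0 := by
    intro q
    rw [← hzero q]
    exact integral_congr_ae (by filter_upwards [hae] with t ht; rw [ht])
  have hpars := tsum_sq_fourierCoeff F
  simp only [hcoeff, norm_zero] at hpars
  rw [zero_pow (by norm_num : (2:ℕ) ≠ 0), tsum_zero] at hpars
  have h2 : ∫ t : UnitAddCircle, ‖g t‖^2 ∂haarAddCircle = 0 := by
    have hcg : ∫ t : UnitAddCircle, ‖g t‖^2 ∂haarAddCircle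
        = ∫ t : UnitAddCircle, ‖(F : UnitAddCircle → ℂ) t‖^2 ∂haarAddCircle :=
      integral_congr_ae (by filter_upwards [hae] with t ht; rw [ht])
    rw [hcg, ← hpars]
  have h3 : (fun t : UnitAddCircle => ‖g t‖^2) =ᵐ[haarAddCircle] 0 := by
    rw [← integral_eq_zero_iff_of_nonneg]
    · exact h2
    · exact fun t => by positivity
    · have hc2 : Continuous fun t : UnitAddCircle => ‖g t‖^2 := by continuity
      have hcs : HasCompactSupport fun t : UnitAddCircle => ‖g t‖^2 :=
        IsCompact.of_isClosed_subset isCompact_univ (isClosed_tsupport _) (Set.subset_univ _)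
      exact hc2.integrable_of_hasCompactSupport hcs
  have h4 : (fun t : UnitAddCircle => ‖g t‖^2) = 0 := by
    have hcont2 : Continuous fun t : UnitAddCircle => ‖g t‖^2 := by continuity
    exact Measure.eq_of_ae_eq h3 hcont2 continuous_const
  intro t
  have ht4 := congrFun h4 t
  simp only [Pi.zero_apply] at ht4
  have hn : ‖g t‖ = 0 := by nlinarith [norm_nonneg (g t)]
  have hgt : ((f t : ℂ)) = 0 := norm_eq_zero.mp hn
  exact_mod_cast hgt

theorem stmt19 (ℓ : ℕ) (hℓ : 2 ≤ ℓ) (τ : UnitAddCircle → ℝ)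
    (hτlip : ∃ L : NNReal, LipschitzWith L τ) (hnc : ∃ x y, τ x ≠ τ y)
    (hint : ∫ θ : UnitAddCircle, τ θ = 0)
    (Λ : ℝ) (hΛ : Λ < 1)
    (lam : ℕ → ℝ) (μ : ℕ → UnitAddCircle → ℝ)
    (hlam : ∀ n : ℕ, lam (n + 1) ∈ Set.Ioc (0:ℝ) Λ)
    (hμ0 : μ 0 = τ)
    (hμlip : ∀ n : ℕ, ∃ L : NNReal, LipschitzWith L (μ n))
    (hμint : ∀ n : ℕ, ∫ θ : UnitAddCircle, μ n θ = 0)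
    (hrec : ∀ (n : ℕ) (θ : UnitAddCircle),
      μ (n + 1) ((ℓ : ℤ) • θ) - lam (n + 1) * μ (n + 1) θ = μ n θ) :
    False := by
  obtain ⟨Lτ, hLτ⟩ := hτlip
  set L₀ : ℝ := (Lτ : ℝ) with hL₀def
  have hL₀ : 0 ≤ L₀ := Lτ.coe_nonneg
  have hΛ0 : 0 < Λ := lt_of_lt_of_le (hlam 0).1 (hlam 0).2
  have hcont : ∀ n, Continuous (μ n) := fun n => (hμlip n).choose_spec.continuous
  have hℓz : ((ℓ:ℤ)) ≠ 0 := by exact_mod_cast (by omega : ℓ ≠ 0)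
  -- uniform Lipschitz bound
  have hlipL : ∀ n, ∀ x y, |μ n x - μ n y| ≤ L₀ * dist x y := by
    intro n
    induction n with
    | zero =>
      intro x y
      rw [hμ0]
      have := hLτ.dist_le_mul x y
      simpa [Real.dist_eq] using this
    | succ n ih =>
      obtain ⟨K, hK⟩ := hμlip (n+1)
      refine lip_step' ℓ hℓ Λ hΛ0 hΛ (lam (n+1)) (hlam n) (μ n) (μ (n+1)) L₀ K hL₀
        K.coe_nonneg ih (fun x y => by simpa [Real.dist_eq] using hK.dist_le_mul x y) (hrec n)
  -- uniform sup bound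
  have hsup : ∀ n θ, |μ n θ| ≤ L₀ := fun n =>
    sup_bound' (μ n) (hcont n) L₀ hL₀ (hlipL n) (hμint n)
  -- complexification
  have hgc : ∀ n, Continuous (fun θ : UnitAddCircle => ((μ n θ : ℝ) : ℂ)) := fun n =>
    Complex.continuous_ofReal.comp (hcont n)
  have hgsup : ∀ n θ, ‖((μ n θ : ℝ) : ℂ)‖ ≤ L₀ := by
    intro n θ
    rw [Complex.norm_real, Real.norm_eq_abs]
    exact hsup n θ
  -- Fourier coefficient recursion
  have hcoeff_rec : ∀ n q,
      fourierCoeff (fun θ : UnitAddCircle => ((μ (n+1) ((ℓ:ℤ) • θ) : ℝ) : ℂ)) q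
      = fourierCoeff (fun θ : UnitAddCircle => ((μ n θ : ℝ) : ℂ)) q
        + ((lam (n+1) : ℝ) : ℂ) * fourierCoeff (fun θ : UnitAddCircle => ((μ (n+1) θ : ℝ) : ℂ)) q := by
    intro n q
    have hint1 : Integrable (fun t : UnitAddCircle => fourier (-q) t • ((μ n t : ℝ) : ℂ))
        haarAddCircle :=
      integrable_of_continuousC' _ ((map_continuous (fourier (-q))).smul (hgc n))
    have hint2 : Integrable
        (fun t : UnitAddCircle =>
          ((lam (n+1) : ℝ) : ℂ) * (fourier (-q) t • ((μ (n+1) t : ℝ) : ℂ))) haarAddCircle :=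
      (integrable_of_continuousC' _ ((map_continuous (fourier (-q))).smul (hgc (n+1)))).const_mul _
    calc fourierCoeff (fun θ : UnitAddCircle => ((μ (n+1) ((ℓ:ℤ) • θ) : ℝ) : ℂ)) q
        = ∫ t : UnitAddCircle, (fourier (-q) t • ((μ n t : ℝ) : ℂ)
            + ((lam (n+1) : ℝ) : ℂ) * (fourier (-q) t • ((μ (n+1) t : ℝ) : ℂ)))
            ∂haarAddCircle := by
          refine integral_congr_ae (Filter.Eventually.of_forall fun t => ?_)
          show fourier (-q) t • ((μ (n+1) ((ℓ:ℤ) • t) : ℝ) : ℂ) = _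
          have := hrec n t
          have hval : ((μ (n+1) ((ℓ:ℤ) • t) : ℝ) : ℂ)
              = ((μ n t : ℝ) : ℂ) + ((lam (n+1) : ℝ) : ℂ) * ((μ (n+1) t : ℝ) : ℂ) := by
            push_cast
            rw [← this]
            push_cast
            ring
          rw [hval]
          simp only [smul_eq_mul]
          ring
      _ = (∫ t : UnitAddCircle, fourier (-q) t • ((μ n t : ℝ) : ℂ) ∂haarAddCircle)
          + ∫ t : UnitAddCircle,
              ((lam (n+1) : ℝ) : ℂ) * (fourier (-q) t • ((μ (n+1) t : ℝ) : ℂ)) ∂haarAddCircle :=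
          integral_add hint1 hint2
      _ = fourierCoeff (fun θ : UnitAddCircle => ((μ n θ : ℝ) : ℂ)) q
          + ((lam (n+1) : ℝ) : ℂ)
            * fourierCoeff (fun θ : UnitAddCircle => ((μ (n+1) θ : ℝ) : ℂ)) q := by
          rw [integral_const_mul]
          rfl
  -- vanishing of all nonzero coefficients
  have hvanish : ∀ N : ℕ, ∀ q : ℤ, q.natAbs ≤ N → q ≠ 0 → ∀ n,
      fourierCoeff (fun θ : UnitAddCircle => ((μ n θ : ℝ) : ℂ)) q = 0 := by
    intro N
    induction N with
    | zero =>
      intro q hq hq0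
      exfalso
      exact hq0 (by omega : q = 0)
    | succ N ihN =>
      intro q hqle hq0
      have hcomp0 : ∀ n',
          fourierCoeff (fun θ : UnitAddCircle => ((μ n' ((ℓ:ℤ) • θ) : ℝ) : ℂ)) q = 0 := by
        intro n'
        by_cases hdvd : (ℓ:ℤ) ∣ q
        · obtain ⟨q', rfl⟩ := hdvd
          have hq'0 : q' ≠ 0 := by
            rintro rfl
            simp at hq0
          have hlt : q'.natAbs ≤ N := by
            have h1 : ((ℓ:ℤ) * q').natAbs = ℓ * q'.natAbs := by
              rw [Int.natAbs_mul, Int.natAbs_natCast]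
            have h2 : 1 ≤ q'.natAbs := Int.natAbs_pos.mpr hq'0
            have h3 : ((ℓ:ℤ) * q').natAbs ≤ N + 1 := hqle
            rw [h1] at h3
            have h4 : 2 * q'.natAbs ≤ ℓ * q'.natAbs := Nat.mul_le_mul_right _ hℓ
            omega
          have := fourierCoeff_comp_smul'
            (fun θ : UnitAddCircle => ((μ n' θ : ℝ) : ℂ)) (hgc n') (ℓ:ℤ) hℓz q'
          rw [this]
          exact ihN q' hlt hq'0 n'
        · exact fourierCoeff_comp_smul_nondvd'
            (fun θ : UnitAddCircle => ((μ n' θ : ℝ) : ℂ)) ℓ hℓ q hdvd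
      have hstep : ∀ n,
          fourierCoeff (fun θ : UnitAddCircle => ((μ n θ : ℝ) : ℂ)) q
          = -((lam (n+1) : ℝ) : ℂ)
            * fourierCoeff (fun θ : UnitAddCircle => ((μ (n+1) θ : ℝ) : ℂ)) q := by
        intro n
        have h := hcoeff_rec n q
        rw [hcomp0 (n+1)] at h
        linear_combination -h
      have hbound : ∀ m n,
          ‖fourierCoeff (fun θ : UnitAddCircle => ((μ n θ : ℝ) : ℂ)) q‖ ≤ Λ^m * L₀ := by
        intro m
        induction m with
        | zero =>
          intro n
          simpa using norm_fourierCoeff_le' _ L₀ (hgsup n) q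
        | succ m ih =>
          intro n
          rw [hstep n, norm_mul, norm_neg]
          have hcn : ‖((lam (n+1) : ℝ) : ℂ)‖ = lam (n+1) := by
            rw [Complex.norm_real, Real.norm_eq_abs, abs_of_pos (hlam n).1]
          rw [hcn]
          calc lam (n+1) * ‖fourierCoeff (fun θ : UnitAddCircle => ((μ (n+1) θ : ℝ) : ℂ)) q‖
              ≤ Λ * (Λ^m * L₀) := by
                refine mul_le_mul (hlam n).2 (ih (n+1)) (norm_nonneg _) hΛ0.le
            _ = Λ^(m+1) * L₀ := by ring
      intro n
      have hlim : Filter.Tendsto (fun m : ℕ => Λ^m * L₀) Filter.atTop (nhds 0) := by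
        have h1 : Filter.Tendsto (fun m : ℕ => Λ^m) Filter.atTop (nhds 0) :=
          tendsto_pow_atTop_nhds_zero_of_lt_one hΛ0.le hΛ
        simpa using h1.mul_const L₀
      have hle : ‖fourierCoeff (fun θ : UnitAddCircle => ((μ n θ : ℝ) : ℂ)) q‖ ≤ 0 :=
        ge_of_tendsto' hlim (fun m => hbound m n)
      exact norm_le_zero_iff.mp hle
  -- all Fourier coefficients of τ vanish
  have hτcoeff : ∀ q : ℤ,
      fourierCoeff (fun t : UnitAddCircle => ((μ 0 t : ℝ) : ℂ)) q = 0 := by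
    intro q
    rcases eq_or_ne q 0 with rfl | hq
    · have h0 : fourierCoeff (fun t : UnitAddCircle => ((μ 0 t : ℝ) : ℂ)) 0
          = ∫ t : UnitAddCircle, ((μ 0 t : ℝ) : ℂ) ∂haarAddCircle := by
        refine integral_congr_ae (Filter.Eventually.of_forall fun t => ?_)
        show fourier (-0) t • ((μ 0 t : ℝ) : ℂ) = _
        rw [neg_zero, fourier_zero, one_smul]
      rw [h0, haar_eq_vol']
      have : ∫ t : UnitAddCircle, ((μ 0 t : ℝ) : ℂ) = (((∫ t : UnitAddCircle, μ 0 t : ℝ)) : ℂ) :=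
        integral_ofReal
      rw [this, hμint 0]
      norm_num
    · exact hvanish q.natAbs q le_rfl hq 0
  have hzero : ∀ t, μ 0 t = 0 := zero_of_fourierCoeff' (μ 0) (hcont 0) hτcoeff
  obtain ⟨x, y, hxy⟩ := hnc
  rw [← hμ0] at hxy
  exact hxy (by rw [hzero x, hzero y])
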